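/- Let (Ω, 𝓕, P) be a probability space, Z : Ω → 𝒵 a measurable map into a measurable space 𝒵, and W₁, W₂ : Ω → ℝ integrable nonnegative random variables. Let h : 𝒵 → ℝ be a measurable function such that h(Z) is a version of the conditional expectation E[W₁ − W₂ ∣ σ(Z)]. Define d* : 𝒵 → {−1, 1} by d*(z) = 1 if h(z) ≥ 0 and d*(z) = −1 otherwise. Then for every measurable d : 𝒵 → {−1, 1}, E[1{d*(Z) = 1} W₁ + 1{d*(Z) = −1} W₂] ≥ E[1{d(Z) = 1} W₁ + 1{d(Z) = −1} W₂]. -/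

import Mathlib

open MeasureTheory ProbabilityTheory

/-- Weighted benefit of a decision rule `d` applied to the covariates `Z`:
`E[1{d(Z) = 1} W₁ + 1{d(Z) = -1} W₂]`. -/
noncomputable def ruleGain {Ω 𝒵 : Type*} [MeasurableSpace Ω] (P : Measure Ω)
    (W₁ W₂ : Ω → ℝ) (Z : Ω → 𝒵) (d : 𝒵 → ℝ) : ℝ :=
  ∫ ω, {x | d (Z x) = 1}.indicator W₁ ω + {x | d (Z x) = -1}.indicator W₂ ω ∂P

/-- the rule `d*(z) = sign of E[W₁ - W₂ ∣ Z = z]` maximizes the weighted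
benefit `E[1{d(Z) = 1} W₁ + 1{d(Z) = -1} W₂]` over all measurable rules `d : 𝒵 → {1, -1}`. -/
theorem optimal_rule_is_sign_of_conditional_expectation
    {Ω 𝒵 : Type*} [MeasurableSpace Ω] [MeasurableSpace 𝒵]
    (P : Measure Ω) [IsProbabilityMeasure P]
    (Z : Ω → 𝒵) (hZ : Measurable Z)
    (W₁ W₂ : Ω → ℝ)
    (hW₁ : Integrable W₁ P) (hW₂ : Integrable W₂ P)
    (hW₁0 : ∀ ω, 0 ≤ W₁ ω) (hW₂0 : ∀ ω, 0 ≤ W₂ ω)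
    (h : 𝒵 → ℝ) (hh : Measurable h)
    (hcond : (fun ω => h (Z ω))
      =ᵐ[P] P[fun ω => W₁ ω - W₂ ω | MeasurableSpace.comap Z inferInstance])
    (dstar : 𝒵 → ℝ) (hdstar : ∀ z, dstar z = if 0 ≤ h z then 1 else -1) :
    ∀ d : 𝒵 → ℝ, Measurable d → (∀ z, d z = 1 ∨ d z = -1) →
      ruleGain P W₁ W₂ Z d ≤ ruleGain P W₁ W₂ Z dstar := by
  intro d hd hd1
  have hm : MeasurableSpace.comap Z inferInstance ≤ ‹MeasurableSpace Ω› := hZ.comap_le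
  have hWsub : Integrable (fun ω => W₁ ω - W₂ ω) P := hW₁.sub hW₂
  have hhZint : Integrable (fun ω => h (Z ω)) P :=
    (integrable_condExp).congr hcond.symm
  -- measurability of the decision sets
  have hset : ∀ (e : 𝒵 → ℝ), Measurable e →
      MeasurableSet[MeasurableSpace.comap Z inferInstance] {x | e (Z x) = 1} := by
    intro e he
    exact ⟨{z | e z = 1}, he (measurableSet_singleton 1), rfl⟩
  have hdstar_meas : Measurable dstar := by
    have : dstar = fun z => if 0 ≤ h z then (1 : ℝ) else -1 := funext hdstar
    rw [this]
    exact Measurable.ite (measurableSet_le measurable_const hh)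
      measurable_const measurable_const
  have hdstar1 : ∀ z, dstar z = 1 ∨ dstar z = -1 := by
    intro z; rw [hdstar z]; by_cases hz : 0 ≤ h z <;> simp [hz]
  -- key decomposition of the gain
  have key : ∀ (e : 𝒵 → ℝ), Measurable e → (∀ z, e z = 1 ∨ e z = -1) →
      ruleGain P W₁ W₂ Z e
        = (∫ ω, W₂ ω ∂P) + ∫ ω, {x | e (Z x) = 1}.indicator (fun x => h (Z x)) ω ∂P := by
    intro e he he1
    have hSm : MeasurableSet {x | e (Z x) = 1} := hm _ (hset e he)
    have hptw : ∀ ω, {x | e (Z x) = 1}.indicator W₁ ω + {x | e (Z x) = -1}.indicator W₂ ω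
        = W₂ ω + {x | e (Z x) = 1}.indicator (fun x => W₁ x - W₂ x) ω := by
      intro ω
      rcases he1 (Z ω) with h1 | h1
      · have h2 : ¬ (e (Z ω) = -1) := by rw [h1]; norm_num
        rw [Set.indicator_of_mem (by exact h1), Set.indicator_of_notMem (by exact h2),
          Set.indicator_of_mem (by exact h1)]
        ring
      · have h2 : ¬ (e (Z ω) = 1) := by rw [h1]; norm_num
        rw [Set.indicator_of_notMem (by exact h2), Set.indicator_of_mem (by exact h1),
          Set.indicator_of_notMem (by exact h2)]
        ring
    have heq1 : ruleGain P W₁ W₂ Z e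
        = ∫ ω, (W₂ ω + {x | e (Z x) = 1}.indicator (fun x => W₁ x - W₂ x) ω) ∂P := by
      unfold ruleGain
      exact integral_congr_ae (Filter.Eventually.of_forall hptw)
    rw [heq1, integral_add hW₂ (hWsub.indicator hSm), integral_indicator hSm,
      integral_indicator hSm]
    congr 1
    calc ∫ ω in {x | e (Z x) = 1}, (W₁ ω - W₂ ω) ∂P
        = ∫ ω in {x | e (Z x) = 1},
            (P[fun ω => W₁ ω - W₂ ω | MeasurableSpace.comap Z inferInstance]) ω ∂P :=
          (setIntegral_condExp hm hWsub (hset e he)).symm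
      _ = ∫ ω in {x | e (Z x) = 1}, h (Z ω) ∂P :=
          setIntegral_congr_ae hSm (hcond.symm.mono fun ω hω _ => hω)
  rw [key d hd hd1, key dstar hdstar_meas hdstar1]
  apply add_le_add le_rfl
  apply integral_mono ((hhZint.indicator (hm _ (hset d hd))))
    ((hhZint.indicator (hm _ (hset dstar hdstar_meas))))
  intro ω
  by_cases hz : 0 ≤ h (Z ω)
  · have h1 : dstar (Z ω) = 1 := by rw [hdstar]; simp [hz]
    simp only [Set.indicator_apply, Set.mem_setOf_eq, h1, if_true]
    split_ifs with h'
    · exact le_refl _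
    · exact hz
  · have h1 : ¬ dstar (Z ω) = 1 := by rw [hdstar, if_neg hz]; norm_num
    simp only [Set.indicator_apply, Set.mem_setOf_eq, h1, if_false]
    split_ifs with h'
    · linarith [lt_of_not_ge hz]
    · exact le_refl _
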